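/- Let p(x,y) = −ln(xy − 1) for xy > 1 and +∞ otherwise be the polar cost on ℝ₊ × ℝ₊. The set A = {(x, 3−2x) : 1/2 < x < 1} ∪ {(x, 3/2 − x/2) : 1 < x < 2} is p-cyclically monotone: all its points have finite cost, and for any finite collection (x_i, y_i)_{i=1}^m ⊆ A and any permutation σ of [m], Σ p(x_i, y_i) ≤ Σ p(x_i, y_{σ(i)}). -/
import Mathlib

/-- The polar cost on `ℝ₊ × ℝ₊`: `p(x,y) = −ln(xy − 1)` if `xy > 1`, and `+∞` otherwise. -/
noncomputable def polarCost (x y : ℝ) : EReal :=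
  if 1 < x * y then ((-Real.log (x * y - 1) : ℝ) : EReal) else ⊤

/-- The set `A = {(x, 3−2x) : 1/2 < x < 1} ∪ {(x, 3/2 − x/2) : 1 < x < 2}`. -/
def exampleSet : Set (ℝ × ℝ) :=
  {p | ∃ x : ℝ, 1 / 2 < x ∧ x < 1 ∧ p = (x, 3 - 2 * x)} ∪
    {p | ∃ x : ℝ, 1 < x ∧ x < 2 ∧ p = (x, 3 / 2 - x / 2)}

/-- A Kantorovich-type potential on the second coordinate. -/
noncomputable def psiAux (y : ℝ) : ℝ :=
  if 1 < y then -2 * Real.log (y - 1) + Real.log (2 - y)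
  else -2 * Real.log (2 * y - 1) + Real.log (1 - y)

lemma logKey {P ap bp Q aq bq : ℝ} (hP : 0 < P) (hap : 0 < ap) (hbp : 0 < bp)
    (hQ : 0 < Q) (haq : 0 < aq) (hbq : 0 < bq)
    (h : ap ^ 2 * Q * bq ≤ aq ^ 2 * P * bp) :
    -Real.log P - (-2 * Real.log ap + Real.log bp) ≤
      -Real.log Q - (-2 * Real.log aq + Real.log bq) := by
  have h1 : Real.log (ap ^ 2 * Q * bq) ≤ Real.log (aq ^ 2 * P * bp) :=
    Real.log_le_log (by positivity) h
  have e1 : Real.log (ap ^ 2 * Q * bq) = 2 * Real.log ap + Real.log Q + Real.log bq := by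
    rw [Real.log_mul (by positivity) hbq.ne', Real.log_mul (by positivity) hQ.ne',
      Real.log_pow]
    push_cast; ring
  have e2 : Real.log (aq ^ 2 * P * bp) = 2 * Real.log aq + Real.log P + Real.log bp := by
    rw [Real.log_mul (by positivity) hbp.ne', Real.log_mul (by positivity) hP.ne',
      Real.log_pow]
    push_cast; ring
  rw [e1, e2] at h1
  linarith

/-- diagonal products exceed 1 on the example set -/
lemma diag_gt_one {p : ℝ × ℝ} (hp : p ∈ exampleSet) : 1 < p.1 * p.2 := by
  rcases hp with ⟨x, h1, h2, rfl⟩ | ⟨x, h1, h2, rfl⟩ <;> simp only <;> nlinarith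

/-- the key one-pair inequality, for pairs on the same branch -/
lemma keyIneq {p q : ℝ × ℝ} (hp : p ∈ exampleSet) (hq : q ∈ exampleSet)
    (hpq : 1 < p.1 * q.2) (hbr : p.1 < 1 ↔ q.1 < 1) :
    -Real.log (p.1 * p.2 - 1) - psiAux p.2 ≤ -Real.log (p.1 * q.2 - 1) - psiAux q.2 := by
  rcases hp with ⟨x, hx1, hx2, rfl⟩ | ⟨x, hx1, hx2, rfl⟩ <;>
    rcases hq with ⟨t, ht1, ht2, rfl⟩ | ⟨t, ht1, ht2, rfl⟩ <;> simp only at hpq hbr ⊢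
  · -- both on first branch
    rw [psiAux, psiAux, if_pos (by linarith : (1:ℝ) < 3 - 2*x),
      if_pos (by linarith : (1:ℝ) < 3 - 2*t)]
    have h := logKey (P := x * (3 - 2*x) - 1) (ap := 3 - 2*x - 1) (bp := 2 - (3 - 2*x))
      (Q := x * (3 - 2*t) - 1) (aq := 3 - 2*t - 1) (bq := 2 - (3 - 2*t))
      (by nlinarith) (by linarith) (by linarith) (by linarith) (by linarith) (by linarith)
      (by nlinarith [mul_nonneg (by linarith : (0:ℝ) ≤ 1 - x) (sq_nonneg (x - t))])
    convert h using 3 <;> ring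
  · -- p on first branch, q on second: contradiction with hbr
    exact absurd (hbr.mp (by linarith)) (by linarith)
  · -- p on second branch, q on first: contradiction with hbr
    exact absurd (hbr.mpr (by linarith)) (by linarith)
  · -- both on second branch
    rw [psiAux, psiAux, if_neg (by push_neg; linarith : ¬ (1:ℝ) < 3/2 - x/2),
      if_neg (by push_neg; linarith : ¬ (1:ℝ) < 3/2 - t/2)]
    have h := logKey (P := x * (3/2 - x/2) - 1) (ap := 2 * (3/2 - x/2) - 1)
      (bp := 1 - (3/2 - x/2))
      (Q := x * (3/2 - t/2) - 1) (aq := 2 * (3/2 - t/2) - 1) (bq := 1 - (3/2 - t/2))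
      (by nlinarith) (by linarith) (by linarith) (by linarith) (by linarith) (by linarith)
      (by nlinarith [mul_nonneg (by linarith : (0:ℝ) ≤ 2 - x) (sq_nonneg (x - t))])
    convert h using 3 <;> ring

lemma ereal_coe_sum {ι : Type*} (s : Finset ι) (g : ι → ℝ) :
    ((∑ i ∈ s, g i : ℝ) : EReal) = ∑ i ∈ s, ((g i : ℝ) : EReal) := by
  induction s using Finset.cons_induction with
  | empty => simp
  | cons a s ha ih => rw [Finset.sum_cons, Finset.sum_cons, EReal.coe_add, ih]

lemma polarCost_ne_bot (x y : ℝ) : polarCost x y ≠ ⊥ := by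
  unfold polarCost
  split
  · exact EReal.coe_ne_bot _
  · simp

/-- the set `A` is `p`-cyclically monotone for the polar cost: all its points
have finite cost, and for any finite collection of points of `A` and any permutation `σ`,
`Σ p(x_i, y_i) ≤ Σ p(x_i, y_{σ(i)})`. -/
theorem exampleSet_p_cyclically_monotone :
    (∀ p ∈ exampleSet, polarCost p.1 p.2 ≠ ⊤) ∧
      ∀ (m : ℕ) (f : Fin m → ℝ × ℝ), (∀ i, f i ∈ exampleSet) →
        ∀ σ : Equiv.Perm (Fin m),
          ∑ i, polarCost (f i).1 (f i).2 ≤ ∑ i, polarCost (f i).1 (f (σ i)).2 := by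
  constructor
  · intro p hp
    rw [polarCost, if_pos (diag_gt_one hp)]
    exact EReal.coe_ne_top _
  · intro m f hf σ
    by_cases hall : ∀ i, 1 < (f i).1 * (f (σ i)).2
    · -- all cross products finite
      -- branch preservation
      have hx_pos : ∀ i, 0 < (f i).1 := by
        intro i
        rcases hf i with ⟨x, h1, h2, he⟩ | ⟨x, h1, h2, he⟩ <;> rw [he] <;> simp only <;> linarith
      have hstep : ∀ i, (f i).1 < 1 → (f (σ i)).1 < 1 := by
        intro i hi
        have h2 : 1 < (f (σ i)).2 := by nlinarith [hall i, hx_pos i]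
        rcases hf (σ i) with ⟨x, h1', h2', he⟩ | ⟨x, h1', h2', he⟩ <;> rw [he] at h2 ⊢ <;>
          simp only at h2 ⊢ <;> linarith
      have hbr : ∀ i, ((f i).1 < 1 ↔ (f (σ i)).1 < 1) := by
        set S : Finset (Fin m) := Finset.univ.filter (fun i => (f i).1 < 1) with hS
        have hsub : S.image σ ⊆ S := by
          intro j hj
          obtain ⟨i, hi, rfl⟩ := Finset.mem_image.mp hj
          simp only [hS, Finset.mem_filter, Finset.mem_univ, true_and] at hi ⊢
          exact hstep i hi
        have heq : S.image σ = S :=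
          Finset.eq_of_subset_of_card_le hsub
            (le_of_eq (Finset.card_image_of_injective S σ.injective).symm)
        intro i
        constructor
        · exact hstep i
        · intro hσi
          have : σ i ∈ S := by
            simp only [hS, Finset.mem_filter, Finset.mem_univ, true_and]; exact hσi
          rw [← heq] at this
          obtain ⟨j, hj, hje⟩ := Finset.mem_image.mp this
          have : j = i := σ.injective hje
          subst this
          simpa [hS] using hj
      -- convert everything to reals
      have hL : ∀ i, polarCost (f i).1 (f i).2 =
          ((-Real.log ((f i).1 * (f i).2 - 1) : ℝ) : EReal) := fun i => by
        rw [polarCost, if_pos (diag_gt_one (hf i))]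
      have hR : ∀ i, polarCost (f i).1 (f (σ i)).2 =
          ((-Real.log ((f i).1 * (f (σ i)).2 - 1) : ℝ) : EReal) := fun i => by
        rw [polarCost, if_pos (hall i)]
      rw [Finset.sum_congr rfl fun i _ => hL i, Finset.sum_congr rfl fun i _ => hR i,
        ← ereal_coe_sum, ← ereal_coe_sum]
      rw [EReal.coe_le_coe_iff]
      -- real inequality via the potential
      have hpair : ∀ i, -Real.log ((f i).1 * (f i).2 - 1) - psiAux (f i).2 ≤
          -Real.log ((f i).1 * (f (σ i)).2 - 1) - psiAux (f (σ i)).2 :=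
        fun i => keyIneq (hf i) (hf (σ i)) (hall i) (hbr i)
      have hsum := Finset.sum_le_sum (fun i (_ : i ∈ Finset.univ) => hpair i)
      rw [Finset.sum_sub_distrib, Finset.sum_sub_distrib] at hsum
      have hperm : ∑ i, psiAux (f (σ i)).2 = ∑ i, psiAux (f i).2 :=
        Equiv.sum_comp σ (fun i => psiAux (f i).2)
      linarith
    · -- some cross product is infinite
      push_neg at hall
      obtain ⟨i0, hi0⟩ := hall
      have hterm : polarCost (f i0).1 (f (σ i0)).2 = ⊤ := if_neg (not_lt.mpr hi0)
      have htop : ∑ i, polarCost (f i).1 (f (σ i)).2 = ⊤ := by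
        rw [← Finset.add_sum_erase _ _ (Finset.mem_univ i0), hterm]
        refine EReal.top_add_of_ne_bot ?_
        generalize (Finset.univ.erase i0) = s
        induction s using Finset.cons_induction with
        | empty => simp
        | cons a s ha ih =>
          rw [Finset.sum_cons]
          intro h
          exact (EReal.add_eq_bot_iff.mp h).elim (polarCost_ne_bot _ _) ih
      rw [htop]
      exact le_top
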